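/- Let X be a Banach space over 𝕂 = ℝ or ℂ and A ⊆ X × X a relation. Then A is dissipative if and only if for every (x,y) ∈ A there exists x' ∈ X' with ‖x'‖ ≤ 1, x'(x) = ‖x‖, and Re x'(y) ≤ 0. -/

import Mathlib

open Filter Topology

/-- A relation `A ⊆ X × X` is dissipative if `‖lx‖ ≤ ‖lx - y‖` for all `(x,y) ∈ A`
and all real `l > 0`. -/
def Dissipative {𝕜 X : Type*} [RCLike 𝕜] [NormedAddCommGroup X] [NormedSpace 𝕜 X]
    (A : Submodule 𝕜 (X × X)) : Prop :=
  ∀ p ∈ A, ∀ l : ℝ, 0 < l → ‖(l : 𝕜) • p.1‖ ≤ ‖(l : 𝕜) • p.1 - p.2‖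

set_option maxHeartbeats 1000000 in
/-- A relation `A` is dissipative iff for every `(x,y) ∈ A` there is `x'` in the duality
map of `x` (i.e. `‖x'‖ ≤ 1` and `x'(x) = ‖x‖`) with `Re x'(y) ≤ 0`. -/
theorem stmt_9 {𝕜 X : Type*} [RCLike 𝕜] [NormedAddCommGroup X] [NormedSpace 𝕜 X]
    [CompleteSpace X] (A : Submodule 𝕜 (X × X)) :
    Dissipative A ↔
      ∀ p ∈ A, ∃ x' : X →L[𝕜] 𝕜,
        ‖x'‖ ≤ 1 ∧ x' p.1 = (‖p.1‖ : 𝕜) ∧ RCLike.re (x' p.2) ≤ 0 := by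
  constructor
  · intro hA p hp
    obtain ⟨x, y⟩ := p
    simp only at *
    -- rescale: ‖x‖ ≤ ‖x - t • y‖ for all t > 0
    have key : ∀ t : ℝ, 0 < t → ‖x‖ ≤ ‖x - (t : 𝕜) • y‖ := by
      intro t ht
      have h := hA (x, y) hp t⁻¹ (by positivity)
      simp only at h
      have ht0 : (t : 𝕜) ≠ 0 := by exact_mod_cast ht.ne'
      have e : ∀ v : X, t * ‖v‖ = ‖(t : 𝕜) • v‖ := fun v => by
        rw [norm_smul, RCLike.norm_ofReal, abs_of_pos ht]
      have hc : (t : 𝕜) * ((t⁻¹ : ℝ) : 𝕜) = 1 := by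
        push_cast
        field_simp
      calc ‖x‖ = t * ‖((t⁻¹ : ℝ) : 𝕜) • x‖ := by
            rw [e, smul_smul, hc, one_smul]
        _ ≤ t * ‖((t⁻¹ : ℝ) : 𝕜) • x - y‖ := mul_le_mul_of_nonneg_left h ht.le
        _ = ‖(t : 𝕜) • (((t⁻¹ : ℝ) : 𝕜) • x - y)‖ := e _
        _ = ‖x - (t : 𝕜) • y‖ := by rw [smul_sub, smul_smul, hc, one_smul]
    by_cases hx : x = 0
    · refine ⟨0, by simp, by simp [hx], by simp⟩
    · have hxnorm : (0:ℝ) < ‖x‖ := norm_pos_iff.mpr hx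
      set t : ℕ → ℝ := fun n => ((n : ℝ) + 1)⁻¹ with ht_def
      have htpos : ∀ n, 0 < t n := fun n => by positivity
      have hne : ∀ n, x - ((t n : ℝ) : 𝕜) • y ≠ 0 := by
        intro n hzero
        have h := key (t n) (htpos n)
        rw [hzero] at h
        simp at h
        exact hx h
      choose f hf1 hf2 using fun n => exists_dual_vector 𝕜 _ (norm_ne_zero_iff.mpr (hne n))
      have hkey2 : ∀ n, RCLike.re (f n x) - t n * RCLike.re (f n y)
          = ‖x - ((t n : ℝ) : 𝕜) • y‖ := by
        intro n
        have e : RCLike.re (f n (x - ((t n : ℝ) : 𝕜) • y)) = ‖x - ((t n : ℝ) : 𝕜) • y‖ := by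
          rw [hf2 n]; simp
        rw [map_sub, map_smul, smul_eq_mul, map_sub, RCLike.re_ofReal_mul] at e
        exact e
      have hrex_ub : ∀ n, RCLike.re (f n x) ≤ ‖x‖ := by
        intro n
        calc RCLike.re (f n x) ≤ ‖f n x‖ := RCLike.re_le_norm _
          _ ≤ ‖f n‖ * ‖x‖ := (f n).le_opNorm x
          _ = ‖x‖ := by rw [hf1 n, one_mul]
      have hre_y : ∀ n, RCLike.re (f n y) ≤ 0 := by
        intro n
        have h3 : ‖x‖ ≤ ‖x - ((t n : ℝ) : 𝕜) • y‖ := key (t n) (htpos n)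
        nlinarith [htpos n, hkey2 n, hrex_ub n]
      have hre_y_lb : ∀ n, -‖y‖ ≤ RCLike.re (f n y) := by
        intro n
        have h : ‖f n y‖ ≤ ‖y‖ := by
          calc ‖f n y‖ ≤ ‖f n‖ * ‖y‖ := (f n).le_opNorm y
            _ = ‖y‖ := by rw [hf1 n, one_mul]
        have h2 := abs_le.mp (le_trans (RCLike.abs_re_le_norm (f n y)) h)
        linarith [h2.1]
      have hre_x : ∀ n, ‖x‖ - t n * ‖y‖ ≤ RCLike.re (f n x) := by
        intro n
        have h3 : ‖x‖ ≤ ‖x - ((t n : ℝ) : 𝕜) • y‖ := key (t n) (htpos n)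
        nlinarith [htpos n, hkey2 n, hre_y_lb n]
      -- restrict to the span of {x, y}
      set E : Submodule 𝕜 X := Submodule.span 𝕜 {x, y} with hE_def
      haveI : FiniteDimensional 𝕜 E :=
        FiniteDimensional.span_of_finite 𝕜 (Set.toFinite {x, y})
      haveI : FiniteDimensional 𝕜 (E →L[𝕜] 𝕜) := inferInstance
      haveI : ProperSpace (E →L[𝕜] 𝕜) := FiniteDimensional.proper 𝕜 _
      have hxE : x ∈ E := Submodule.subset_span (Set.mem_insert x {y})
      have hyE : y ∈ E := Submodule.subset_span (Set.mem_insert_of_mem x rfl)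
      set g : ℕ → (E →L[𝕜] 𝕜) := fun n => (f n).comp E.subtypeL with hg_def
      have hgball : ∀ n, g n ∈ Metric.closedBall (0 : E →L[𝕜] 𝕜) 1 := by
        intro n
        have hb : ‖g n‖ ≤ 1 := by
          refine ContinuousLinearMap.opNorm_le_bound _ zero_le_one ?_
          intro z
          calc ‖(f n) (z : X)‖ ≤ ‖f n‖ * ‖(z : X)‖ := (f n).le_opNorm _
            _ = 1 * ‖z‖ := by rw [hf1 n]; rfl
        have hb2 : ‖g n - 0‖ ≤ 1 := by simpa using hb
        exact Metric.mem_closedBall.mpr (by rw [dist_eq_norm]; exact hb2)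
      obtain ⟨G, hGball, φ, hφ, hφtendsto⟩ :=
        (isCompact_closedBall (0 : E →L[𝕜] 𝕜) 1).tendsto_subseq hgball
      have hGnorm : ‖G‖ ≤ 1 := by
        have hb2 : ‖G - 0‖ ≤ 1 := by rw [← dist_eq_norm]; exact Metric.mem_closedBall.mp hGball
        simpa using hb2
      -- evaluation limits
      have heval : ∀ z : E, Tendsto (fun n => g (φ n) z) atTop (𝓝 (G z)) := by
        intro z
        exact ((ContinuousLinearMap.apply 𝕜 𝕜 z).continuous.tendsto G).comp hφtendsto
      have ht_tendsto : Tendsto (fun n => t (φ n)) atTop (𝓝 0) := by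
        exact tendsto_one_div_add_atTop_nhds_zero_nat.comp hφ.tendsto_atTop |>.congr
          (fun n => by simp [ht_def, one_div])
      have hGy : RCLike.re (G ⟨y, hyE⟩) ≤ 0 := by
        have h1 : Tendsto (fun n => RCLike.re (g (φ n) ⟨y, hyE⟩)) atTop
            (𝓝 (RCLike.re (G ⟨y, hyE⟩))) :=
          (RCLike.continuous_re.tendsto _).comp (heval ⟨y, hyE⟩)
        exact le_of_tendsto h1 (Eventually.of_forall fun n => hre_y (φ n))
      have hGx_re : ‖x‖ ≤ RCLike.re (G ⟨x, hxE⟩) := by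
        have h1 : Tendsto (fun n => RCLike.re (g (φ n) ⟨x, hxE⟩)) atTop
            (𝓝 (RCLike.re (G ⟨x, hxE⟩))) :=
          (RCLike.continuous_re.tendsto _).comp (heval ⟨x, hxE⟩)
        have h2 : Tendsto (fun n => ‖x‖ - t (φ n) * ‖y‖) atTop (𝓝 ‖x‖) := by
          have h3 := (tendsto_const_nhds (x := ‖x‖) (f := atTop (α := ℕ))).sub
            (ht_tendsto.mul_const ‖y‖)
          simpa using h3
        exact le_of_tendsto_of_tendsto' h2 h1 fun n => hre_x (φ n)
      have hcoex : ‖(⟨x, hxE⟩ : E)‖ = ‖x‖ := rfl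
      have hGx_norm : ‖G ⟨x, hxE⟩‖ ≤ ‖x‖ := by
        calc ‖G ⟨x, hxE⟩‖ ≤ ‖G‖ * ‖x‖ := by rw [← hcoex]; exact G.le_opNorm _
          _ ≤ 1 * ‖x‖ := mul_le_mul_of_nonneg_right hGnorm (norm_nonneg x)
          _ = ‖x‖ := one_mul _
      have hGx : G ⟨x, hxE⟩ = (‖x‖ : 𝕜) := by
        have hre : RCLike.re (G ⟨x, hxE⟩) = ‖x‖ :=
          le_antisymm (le_trans (RCLike.re_le_norm _) hGx_norm) hGx_re
        have hnorm : ‖G ⟨x, hxE⟩‖ = ‖x‖ :=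
          le_antisymm hGx_norm (hre ▸ RCLike.re_le_norm _)
        have him : RCLike.im (G ⟨x, hxE⟩) = 0 := by
          have h1 := RCLike.normSq_apply (G ⟨x, hxE⟩)
          have h2 : RCLike.normSq (G ⟨x, hxE⟩) = ‖G ⟨x, hxE⟩‖ ^ 2 :=
            RCLike.normSq_eq_def' _
          nlinarith [sq_nonneg (RCLike.im (G ⟨x, hxE⟩))]
        apply RCLike.ext
        · simp [hre]
        · simp [him]
      -- extend to all of X
      obtain ⟨x', hx'ext, hx'norm⟩ := exists_extension_norm_eq E G
      refine ⟨x', ?_, ?_, ?_⟩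
      · rw [hx'norm]; exact hGnorm
      · rw [show x = ((⟨x, hxE⟩ : E) : X) from rfl, hx'ext ⟨x, hxE⟩, hGx]
      · rw [show y = ((⟨y, hyE⟩ : E) : X) from rfl, hx'ext ⟨y, hyE⟩]
        exact hGy
  · intro h p hp l hl
    obtain ⟨x', hx'norm, hx'x, hx'y⟩ := h p hp
    obtain ⟨x, y⟩ := p
    simp only at *
    have h1 : l * ‖x‖ ≤ RCLike.re (x' ((l : 𝕜) • x - y)) := by
      rw [map_sub, map_smul, smul_eq_mul, hx'x, map_sub, RCLike.re_ofReal_mul,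
        RCLike.ofReal_re]
      linarith
    have h2 : RCLike.re (x' ((l : 𝕜) • x - y)) ≤ ‖(l : 𝕜) • x - y‖ := by
      calc RCLike.re (x' ((l : 𝕜) • x - y)) ≤ ‖x' ((l : 𝕜) • x - y)‖ := RCLike.re_le_norm _
        _ ≤ ‖x'‖ * ‖(l : 𝕜) • x - y‖ := x'.le_opNorm _
        _ ≤ 1 * ‖(l : 𝕜) • x - y‖ :=
            mul_le_mul_of_nonneg_right hx'norm (norm_nonneg _)
        _ = _ := one_mul _
    have h3 : ‖(l : 𝕜) • x‖ = l * ‖x‖ := by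
      rw [norm_smul, RCLike.norm_ofReal, abs_of_pos hl]
    linarith
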